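/- arXiv:1808.04732 — 12 statements merged into one kernel-verified Lean document; each statement's English description precedes it below -/
import Mathlib

section
/- Let T and S be perfect trees. If there exists a perfect tree contained in T ∩ S, then the meet T ∧ S (the union of all perfect trees contained in T ∩ S) is itself a perfect tree, T ∧ S ⊆ T ∩ S, and every perfect tree contained in T ∩ S is contained in T ∧ S; that is, T ∧ S is the maximal perfect tree contained in T ∩ S. -/
/-- A tree: a set of finite binary strings closed under initial segments (prefixes). -/
def IsTree (T : Set (List Bool)) : Prop :=
  ∀ ⦃s t : List Bool⦄, s <+: t → t ∈ T → s ∈ T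

/-- A node `t` splits in a set `A` of strings if both one-step extensions belong to `A`. -/
def Splits (A : Set (List Bool)) (t : List Bool) : Prop :=
  t ++ [false] ∈ A ∧ t ++ [true] ∈ A

/-- A perfect tree: a nonempty tree each of whose elements has a splitting extension in it. -/
def IsPerfect (T : Set (List Bool)) : Prop :=
  T.Nonempty ∧ IsTree T ∧ ∀ s ∈ T, ∃ t ∈ T, s <+: t ∧ Splits T t

/-- The cone `C_s`: all strings comparable with `s`. -/
def Cone (s : List Bool) : Set (List Bool) :=
  {t | s <+: t ∨ t <+: s}

/-- `T_s`: the elements of `T` comparable with `s`. -/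
def restrictTo (T : Set (List Bool)) (s : List Bool) : Set (List Bool) :=
  {t ∈ T | s <+: t ∨ t <+: s}

/-- The meet `A ∧ B`: the union of all perfect trees contained in `A ∩ B`. -/
def meet (A B : Set (List Bool)) : Set (List Bool) :=
  ⋃₀ {U | IsPerfect U ∧ U ⊆ A ∩ B}

/-- if some perfect tree is contained in `T ∩ S`, then `T ∧ S` is the
maximal perfect tree contained in `T ∩ S`. -/
theorem meet_isMaximalPerfect (T S : Set (List Bool))
    (hT : IsPerfect T) (hS : IsPerfect S)
    (h : ∃ U, IsPerfect U ∧ U ⊆ T ∩ S) :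
    IsPerfect (meet T S) ∧ meet T S ⊆ T ∩ S ∧
      ∀ U, IsPerfect U → U ⊆ T ∩ S → U ⊆ meet T S := by
  obtain ⟨U0, hU0, hU0sub⟩ := h
  have hsub : meet T S ⊆ T ∩ S := by
    rintro x ⟨U, ⟨hU, hUsub⟩, hx⟩
    exact hUsub hx
  have hmax : ∀ U, IsPerfect U → U ⊆ T ∩ S → U ⊆ meet T S := by
    intro U hU hUsub x hx
    exact ⟨U, ⟨hU, hUsub⟩, hx⟩
  refine ⟨⟨?_, ?_, ?_⟩, hsub, hmax⟩
  · obtain ⟨x, hx⟩ := hU0.1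
    exact ⟨x, hmax U0 hU0 hU0sub hx⟩
  · rintro s t hst ⟨U, ⟨hU, hUsub⟩, ht⟩
    exact ⟨U, ⟨hU, hUsub⟩, hU.2.1 hst ht⟩
  · rintro s ⟨U, ⟨hU, hUsub⟩, hs⟩
    obtain ⟨t, ht, hst, h1, h2⟩ := hU.2.2 s hs
    exact ⟨t, ⟨U, ⟨hU, hUsub⟩, ht⟩, hst, ⟨U, ⟨hU, hUsub⟩, h1⟩, ⟨U, ⟨hU, hUsub⟩, h2⟩⟩
end

section
/- Let T and S be perfect trees and let f be a function from the ordinals to sets of finite binary strings satisfying: f 0 = T ∩ S; f (α+1) = { s ∈ f α : some extension t of s with t ∈ f α splits in f α } for every ordinal α; and f λ = ⋂_{α < λ} f α for every limit ordinal λ. Then there exists a countable ordinal α (i.e., α < ω₁) with f (α+1) = f α; moreover, for every ordinal α with f (α+1) = f α, one has f α = T ∧ S (in particular, if f α is nonempty then f α is the maximal perfect tree contained in T ∩ S, and if f α is empty then no perfect tree is contained in T ∩ S). -/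
/-- the transfinite derivation of `T ∩ S` stabilizes at a countable
stage, and any stable value equals the meet `T ∧ S`. -/
theorem meet_construction_stabilizes (T S : Set (List Bool))
    (hT : IsPerfect T) (hS : IsPerfect S)
    (f : Ordinal → Set (List Bool))
    (h0 : f 0 = T ∩ S)
    (hsucc : ∀ α : Ordinal,
      f (α + 1) = {s ∈ f α | ∃ t ∈ f α, s <+: t ∧ Splits (f α) t})
    (hlim : ∀ l : Ordinal, Order.IsSuccLimit l → f l = {s | ∀ α < l, s ∈ f α}) :
    (∃ α : Ordinal, α < (Cardinal.aleph 1).ord ∧ f (α + 1) = f α) ∧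
      ∀ α : Ordinal, f (α + 1) = f α → f α = meet T S := by
  classical
  -- f is antitone
  have hsub : ∀ α : Ordinal, f (α + 1) ⊆ f α := by
    intro α
    rw [hsucc α]
    exact fun s hs => hs.1
  have hmono : ∀ β α : Ordinal, α ≤ β → f β ⊆ f α := by
    intro β
    induction β using Ordinal.limitRecOn with
    | zero =>
      intro α hα
      obtain rfl : α = 0 := nonpos_iff_eq_zero.mp hα
      exact subset_rfl
    | add_one β ih =>
      intro α hα
      rcases eq_or_lt_of_le hα with rfl | h
      · exact subset_rfl
      · exact (hsub β).trans (ih α (Order.lt_succ_iff.mp (by rwa [Ordinal.add_one_eq_succ] at h)))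
    | limit l hl ih =>
      intro α hα
      rcases eq_or_lt_of_le hα with rfl | h
      · exact subset_rfl
      · rw [hlim l hl]
        exact fun s hs => hs α h
  -- each f α is a tree
  have htree : ∀ α : Ordinal, IsTree (f α) := by
    intro α
    induction α using Ordinal.limitRecOn with
    | zero =>
      rw [h0]
      intro s t hst ht
      exact ⟨hT.2.1 hst ht.1, hS.2.1 hst ht.2⟩
    | add_one β ih =>
      rw [hsucc β]
      rintro s t hst ⟨htβ, u, hu, htu, hsp⟩
      exact ⟨ih hst htβ, u, hu, hst.trans htu, hsp⟩
    | limit l hl ih =>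
      rw [hlim l hl]
      intro s t hst ht γ hγ
      exact ih γ hγ hst (ht γ hγ)
  have hsubTS : ∀ α : Ordinal, f α ⊆ T ∩ S := fun α => h0 ▸ hmono α 0 (zero_le (a := α))
  -- every perfect subtree of T ∩ S is contained in every f α
  have hperf : ∀ U : Set (List Bool), IsPerfect U → U ⊆ T ∩ S →
      ∀ α : Ordinal, U ⊆ f α := by
    intro U hU hUTS α
    induction α using Ordinal.limitRecOn with
    | zero => rw [h0]; exact hUTS
    | add_one β ih =>
      rw [hsucc β]
      intro s hs
      refine ⟨ih hs, ?_⟩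
      obtain ⟨t, htU, hst, hsp⟩ := hU.2.2 s hs
      exact ⟨t, ih htU, hst, ih hsp.1, ih hsp.2⟩
    | limit l hl ih =>
      rw [hlim l hl]
      exact fun s hs γ hγ => ih γ hγ hs
  have part2 : ∀ α : Ordinal, f (α + 1) = f α → f α = meet T S := by
    intro α hfix
    apply subset_antisymm
    · intro s hs
      refine Set.mem_sUnion.2 ⟨f α, ⟨⟨⟨s, hs⟩, htree α, ?_⟩, hsubTS α⟩, hs⟩
      intro u hu
      have h1 : u ∈ f (α + 1) := hfix ▸ hu
      rw [hsucc α] at h1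
      exact h1.2
    · rintro s ⟨U, ⟨hU, hUTS⟩, hsU⟩
      exact hperf U hU hUTS α hsU
  refine ⟨?_, part2⟩
  by_contra hcon
  push_neg at hcon
  have hne : ∀ α : Ordinal, α < (Cardinal.aleph 1).ord → ∃ s, s ∈ f α ∧ s ∉ f (α + 1) := by
    intro α hα
    have hss : f (α + 1) ⊂ f α :=
      ⟨hsub α, fun hc => hcon α hα (subset_antisymm (hsub α) hc)⟩
    obtain ⟨x, hx1, hx2⟩ := Set.exists_of_ssubset hss
    exact ⟨x, hx1, hx2⟩
  choose g hg1 hg2 using hne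
  have key : ∀ a b (ha : a < (Cardinal.aleph 1).ord) (hb : b < (Cardinal.aleph 1).ord),
      a < b → g a ha ≠ g b hb := by
    intro a b ha hb hab he
    exact hg2 a ha (he ▸ hmono b (a + 1)
      (by rwa [Ordinal.add_one_eq_succ, Order.succ_le_iff]) (hg1 b hb))
  have hinj : Function.Injective
      (fun p : Set.Iio (Cardinal.aleph 1).ord => g p.1 p.2) := by
    rintro ⟨a, ha⟩ ⟨b, hb⟩ hab
    simp only at hab
    rcases lt_trichotomy a b with h | h | h
    · exact absurd hab (key a b ha hb h)
    · exact Subtype.ext h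
    · exact absurd hab.symm (key b a hb ha h)
  have hle := Cardinal.lift_mk_le'.mpr ⟨⟨_, hinj⟩⟩
  rw [Ordinal.mk_Iio_ordinal, Cardinal.card_ord, Cardinal.mk_list_eq_aleph0,
    Cardinal.lift_aleph0, Cardinal.lift_id'] at hle
  rw [Cardinal.lift_aleph, Ordinal.lift_one] at hle
  exact absurd hle (not_le.mpr Cardinal.aleph0_lt_aleph_one)
end

section
/- Let T and S be perfect trees and let s be an element of T ∧ S. Then (T ∧ S)_s = T_s ∧ S_s. -/
lemma meet_subset (A B : Set (List Bool)) : meet A B ⊆ A ∩ B := by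
  rintro t ⟨U, ⟨_, hU⟩, ht⟩
  exact hU ht

lemma meet_isPerfect {A B : Set (List Bool)} (h : (meet A B).Nonempty) :
    IsPerfect (meet A B) := by
  refine ⟨h, ?_, ?_⟩
  · rintro a b hab ⟨U, ⟨⟨_, hTree, _⟩, hsub⟩, hb⟩
    exact ⟨U, ⟨⟨⟨a, hTree hab hb⟩, hTree, by exact (by assumption)⟩, hsub⟩, hTree hab hb⟩
  · rintro a ⟨U, ⟨hUperf, hsub⟩, ha⟩
    obtain ⟨t, htU, hat, hsp⟩ := hUperf.2.2 a ha
    exact ⟨t, ⟨U, ⟨hUperf, hsub⟩, htU⟩, hat,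
      ⟨⟨U, ⟨hUperf, hsub⟩, hsp.1⟩, ⟨U, ⟨hUperf, hsub⟩, hsp.2⟩⟩⟩

lemma restrict_isPerfect {T : Set (List Bool)} (hT : IsPerfect T)
    {s : List Bool} (hs : s ∈ T) : IsPerfect (restrictTo T s) := by
  obtain ⟨_, hTree, hsplit⟩ := hT
  refine ⟨⟨s, hs, Or.inl (List.prefix_refl s)⟩, ?_, ?_⟩
  · rintro a b hab ⟨hbT, hbc⟩
    refine ⟨hTree hab hbT, ?_⟩
    rcases hbc with h | h
    · exact (List.prefix_or_prefix_of_prefix hab h).symm.imp id id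
    · exact Or.inr (hab.trans h)
  · rintro a ⟨haT, hac⟩
    have key : ∀ c : List Bool, c ∈ T → a <+: c → s <+: c →
        ∃ t ∈ restrictTo T s, a <+: t ∧ Splits (restrictTo T s) t := by
      intro c hcT hac hsc
      obtain ⟨t, htT, hct, hsp⟩ := hsplit c hcT
      have hst : s <+: t := hsc.trans hct
      refine ⟨t, ⟨htT, Or.inl hst⟩, hac.trans hct,
        ⟨hsp.1, Or.inl (hst.trans (t.prefix_append _))⟩,
        ⟨hsp.2, Or.inl (hst.trans (t.prefix_append _))⟩⟩
    rcases hac with h | h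
    · exact key a haT (List.prefix_refl a) h
    · exact key s hs h (List.prefix_refl s)

/-- `(T ∧ S)_s = T_s ∧ S_s` for `s ∈ T ∧ S`. -/
theorem restrict_meet (T S : Set (List Bool))
    (hT : IsPerfect T) (hS : IsPerfect S)
    (s : List Bool) (hs : s ∈ meet T S) :
    restrictTo (meet T S) s = meet (restrictTo T s) (restrictTo S s) := by
  have hM : IsPerfect (meet T S) := meet_isPerfect ⟨s, hs⟩
  ext t
  constructor
  · intro ht
    refine ⟨restrictTo (meet T S) s, ⟨restrict_isPerfect hM hs, ?_⟩, ht⟩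
    rintro u ⟨huM, huc⟩
    have := meet_subset T S huM
    exact ⟨⟨this.1, huc⟩, ⟨this.2, huc⟩⟩
  · rintro ⟨U, ⟨hUperf, hsub⟩, ht⟩
    have h1 := hsub ht
    refine ⟨⟨U, ⟨hUperf, ?_⟩, ht⟩, h1.1.2⟩
    intro u hu
    exact ⟨(hsub hu).1.1, (hsub hu).2.1⟩
end

section
/- Let T, S, and R be perfect trees. Then (T ∪ S) ∧ R = (T ∧ R) ∪ (S ∧ R); that is, the meet operation distributes over unions of perfect trees. -/
lemma aboveTree_perfect (U : Set (List Bool)) (hU : IsPerfect U) (y : List Bool) (hy : y ∈ U) :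
    IsPerfect {z | z <+: y ∨ (y <+: z ∧ z ∈ U)} := by
  obtain ⟨-, hUt, hUs⟩ := hU
  refine ⟨⟨y, Or.inl (List.prefix_refl _)⟩, ?_, ?_⟩
  · rintro s t hst (hty | ⟨hyt, htU⟩)
    · exact Or.inl (hst.trans hty)
    · rcases List.prefix_or_prefix_of_prefix hst hyt with h | h
      · exact Or.inl h
      · exact Or.inr ⟨h, hUt hst htU⟩
  · rintro s (hsy | ⟨hys, hsU⟩)
    · obtain ⟨t, htU, hyt, hsp⟩ := hUs y hy
      exact ⟨t, Or.inr ⟨hyt, htU⟩, hsy.trans hyt,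
        Or.inr ⟨hyt.trans (List.prefix_append _ _), hsp.1⟩,
        Or.inr ⟨hyt.trans (List.prefix_append _ _), hsp.2⟩⟩
    · obtain ⟨t, htU, hst, hsp⟩ := hUs s hsU
      have hyt := hys.trans hst
      exact ⟨t, Or.inr ⟨hyt, htU⟩, hst,
        Or.inr ⟨hyt.trans (List.prefix_append _ _), hsp.1⟩,
        Or.inr ⟨hyt.trans (List.prefix_append _ _), hsp.2⟩⟩

lemma aboveTree_subset (U A : Set (List Bool)) (hA : IsTree A) (y : List Bool) (hy : y ∈ U)
    (h : ∀ z ∈ U, y <+: z → z ∈ A) :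
    {z | z <+: y ∨ (y <+: z ∧ z ∈ U)} ⊆ A := by
  rintro z (hzy | ⟨hyz, hzU⟩)
  · exact hA hzy (h y hy (List.prefix_refl _))
  · exact h z hzU hyz

/-- the meet distributes over unions of perfect trees. -/
theorem meet_union_distrib (T S R : Set (List Bool))
    (hT : IsPerfect T) (hS : IsPerfect S) (hR : IsPerfect R) :
    meet (T ∪ S) R = meet T R ∪ meet S R := by
  ext x
  constructor
  · rintro ⟨V, ⟨hVp, hVsub⟩, hxV⟩
    have hVR : ∀ z ∈ V, x <+: z → z ∈ R := fun z hz _ => (hVsub hz).2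
    by_cases hcase : ∃ y ∈ V, x <+: y ∧ ∀ z ∈ V, y <+: z → z ∈ T
    · left
      obtain ⟨y, hyV, hxy, hall⟩ := hcase
      exact ⟨_, ⟨aboveTree_perfect V hVp y hyV,
        fun z hz => ⟨aboveTree_subset V T hT.2.1 y hyV hall hz,
          aboveTree_subset V R hR.2.1 y hyV (fun z hz _ => (hVsub hz).2) hz⟩⟩,
        Or.inl hxy⟩
    · right
      push_neg at hcase
      have hallS : ∀ z ∈ V, x <+: z → z ∈ S := by
        intro z hz hxz
        obtain ⟨w, hw, hzw, hwT⟩ := hcase z hz hxz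
        exact hS.2.1 hzw (((hVsub hw).1).resolve_left hwT)
      exact ⟨_, ⟨aboveTree_perfect V hVp x hxV,
        fun z hz => ⟨aboveTree_subset V S hS.2.1 x hxV hallS hz,
          aboveTree_subset V R hR.2.1 x hxV (fun z hz _ => (hVsub hz).2) hz⟩⟩,
        Or.inl (List.prefix_refl _)⟩
  · rintro (⟨V, ⟨hVp, hVs⟩, hx⟩ | ⟨V, ⟨hVp, hVs⟩, hx⟩)
    · exact ⟨V, ⟨hVp, fun z hz => ⟨Or.inl (hVs hz).1, (hVs hz).2⟩⟩, hx⟩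
    · exact ⟨V, ⟨hVp, fun z hz => ⟨Or.inr (hVs hz).1, (hVs hz).2⟩⟩, hx⟩
end

section
/- Let P and Q be perfect posets with P ⊆ Q, and let T, S ∈ P. Then T and S are compatible in Q if and only if T and S are compatible in P. -/
/-- A perfect poset: a collection of perfect trees containing all cones and
closed under unions and (nonempty) meets. -/
def PerfectPoset (P : Set (Set (List Bool))) : Prop :=
  (∀ T ∈ P, IsPerfect T) ∧
  (∀ s : List Bool, Cone s ∈ P) ∧
  (∀ T ∈ P, ∀ S ∈ P, T ∪ S ∈ P) ∧
  (∀ T ∈ P, ∀ S ∈ P, meet T S ≠ ∅ → meet T S ∈ P)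

/-- `T` and `S` are compatible in `P` if some `U ∈ P` is contained in both. -/
def CompatIn (P : Set (Set (List Bool))) (T S : Set (List Bool)) : Prop :=
  ∃ U ∈ P, U ⊆ T ∧ U ⊆ S

/-- if `P ⊆ Q` are perfect posets, compatibility in `Q` coincides with
compatibility in `P` for elements of `P`. -/
theorem compat_absolute_between_perfect_posets
    (P Q : Set (Set (List Bool))) (hP : PerfectPoset P) (hQ : PerfectPoset Q)
    (hPQ : P ⊆ Q) (T S : Set (List Bool)) (hT : T ∈ P) (hS : S ∈ P) :
    CompatIn Q T S ↔ CompatIn P T S := by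
  constructor
  · rintro ⟨U, hUQ, hUT, hUS⟩
    have hUperf : IsPerfect U := hQ.1 U hUQ
    have hUmeet : U ⊆ meet T S := fun x hx =>
      ⟨U, ⟨hUperf, fun y hy => ⟨hUT hy, hUS hy⟩⟩, hx⟩
    have hne : meet T S ≠ ∅ := by
      obtain ⟨x, hx⟩ := hUperf.1
      intro h
      exact absurd (hUmeet hx) (by simp [h])
    refine ⟨meet T S, hP.2.2.2 T hT S hS hne, ?_, ?_⟩
    · rintro x ⟨V, ⟨_, hV⟩, hxV⟩; exact (hV hxV).1
    · rintro x ⟨V, ⟨_, hV⟩, hxV⟩; exact (hV hxV).2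
  · rintro ⟨U, hUP, h1, h2⟩
    exact ⟨U, hPQ hUP, h1, h2⟩
end

section
/- Let P be a perfect poset, let T, S ∈ P, and let m ∈ ℕ. Then there exist T', S' ∈ P such that T' ⊆ T, S' ⊆ S, T' has exactly the same nodes of length m as T, S' has exactly the same nodes of length m as S, and T' ∧ S' = ∅ (no perfect tree is contained in T' ∩ S'). -/
lemma npf (w : List Bool) {a b : Bool} (hab : a ≠ b) : ¬(w ++ [a] <+: w ++ [b]) := by
  intro h
  have := h.eq_of_length (by simp)
  simp at this
  exact hab this

lemma incomp_of_ne_ext {t s u v : List Bool} (hl : t.length = s.length) (hne : t ≠ s)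
    (htu : t <+: u) (hsv : s <+: v) : ¬(u <+: v ∨ v <+: u) := by
  rintro (h | h)
  · exact hne ((List.prefix_or_prefix_of_prefix (htu.trans h) hsv).elim
      (fun p => p.eq_of_length hl) (fun p => (p.eq_of_length hl.symm).symm))
  · exact hne ((List.prefix_or_prefix_of_prefix htu (hsv.trans h)).elim
      (fun p => p.eq_of_length hl) (fun p => (p.eq_of_length hl.symm).symm))

lemma one_step {T : Set (List Bool)} (hT : IsPerfect T) {s} (hs : s ∈ T) :
    ∃ v ∈ T, s <+: v ∧ s.length < v.length := by
  obtain ⟨w, hw, hsw, h0, h1⟩ := hT.2.2 s hs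
  refine ⟨w ++ [true], h1, hsw.trans (List.prefix_append _ _), ?_⟩
  have := hsw.length_le
  simp only [List.length_append, List.length_cons, List.length_nil]
  omega

lemma exists_long {T : Set (List Bool)} (hT : IsPerfect T) {s} (hs : s ∈ T) (n : ℕ) :
    ∃ v ∈ T, s <+: v ∧ n < v.length := by
  induction n with
  | zero =>
    obtain ⟨v, hv, h1, h2⟩ := one_step hT hs
    exact ⟨v, hv, h1, by omega⟩
  | succ n ih =>
    obtain ⟨v, hv, h1, h2⟩ := ih
    obtain ⟨w, hw, h3, h4⟩ := one_step hT hv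
    exact ⟨w, hw, h1.trans h3, by omega⟩

lemma restrictTo_perfect {T : Set (List Bool)} {s} (hT : IsPerfect T) (hs : s ∈ T) :
    IsPerfect (restrictTo T s) := by
  obtain ⟨hne, htree, hsplit⟩ := hT
  refine ⟨⟨s, hs, Or.inl (List.prefix_refl s)⟩, ?_, ?_⟩
  · rintro a b hab ⟨hbT, hb | hb⟩
    · refine ⟨htree hab hbT, ?_⟩
      rcases List.prefix_or_prefix_of_prefix hab hb with h | h
      · exact Or.inr h
      · exact Or.inl h
    · exact ⟨htree hab hbT, Or.inr (hab.trans hb)⟩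
  · rintro x ⟨hxT, hx | hx⟩
    · obtain ⟨w, hw, hxw, h0, h1⟩ := hsplit x hxT
      refine ⟨w, ⟨hw, Or.inl (hx.trans hxw)⟩, hxw,
        ⟨h0, Or.inl ((hx.trans hxw).trans (List.prefix_append _ _))⟩,
        ⟨h1, Or.inl ((hx.trans hxw).trans (List.prefix_append _ _))⟩⟩
    · obtain ⟨w, hw, hsw, h0, h1⟩ := hsplit s hs
      refine ⟨w, ⟨hw, Or.inl hsw⟩, hx.trans hsw,
        ⟨h0, Or.inl (hsw.trans (List.prefix_append _ _))⟩,
        ⟨h1, Or.inl (hsw.trans (List.prefix_append _ _))⟩⟩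

lemma restrictTo_subset (T : Set (List Bool)) (s : List Bool) :
    restrictTo T s ⊆ T ∩ Cone s := fun x hx => ⟨hx.1, hx.2⟩

lemma subset_meet {U A B : Set (List Bool)} (hU : IsPerfect U) (h : U ⊆ A ∩ B) :
    U ⊆ meet A B := fun x hx => ⟨U, ⟨hU, h⟩, hx⟩

lemma meet_cone_mem {P : Set (Set (List Bool))} (hP : PerfectPoset P)
    {T : Set (List Bool)} (hT : T ∈ P) {u : List Bool} (hu : u ∈ T) :
    meet T (Cone u) ∈ P := by
  refine hP.2.2.2 T hT (Cone u) (hP.2.1 u) ?_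
  intro h
  have : u ∈ meet T (Cone u) :=
    subset_meet (restrictTo_perfect (hP.1 T hT) hu) (restrictTo_subset T u)
      ⟨hu, Or.inl (List.prefix_refl u)⟩
  rw [h] at this
  exact this

lemma biUnion_mem {P : Set (Set (List Bool))} (hP : PerfectPoset P) {ι : Type}
    (A : Finset ι) (hA : A.Nonempty) (f : ι → Set (List Bool)) :
    (∀ x ∈ A, f x ∈ P) → (⋃ x ∈ A, f x) ∈ P := by
  induction hA using Finset.Nonempty.cons_induction with
  | singleton a => intro hf; simpa using hf a (Finset.mem_singleton_self a)
  | cons a s ha hs ih =>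
    intro hf
    have heq : (⋃ x ∈ Finset.cons a s ha, f x) = f a ∪ ⋃ x ∈ s, f x := by
      simp [Finset.cons_eq_insert]
    rw [heq]
    exact hP.2.2.1 _ (hf a (by simp)) _ (ih fun x hx => hf x (by simp [hx]))

lemma prefixes_finite (u : List Bool) : {x : List Bool | x <+: u}.Finite := by
  have : {x : List Bool | x <+: u} ⊆ (fun n => u.take n) '' Set.Iic u.length := by
    rintro x hx
    exact ⟨x.length, hx.length_le, (List.prefix_iff_eq_take.mp hx).symm⟩
  exact ((Set.finite_Iic _).image _).subset this

lemma cone_inter_subset {u v : List Bool} (h : ¬(u <+: v ∨ v <+: u)) :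
    Cone u ∩ Cone v ⊆ {x | x <+: u} := by
  rintro x ⟨hxu | hxu, hxv | hxv⟩
  · exact absurd (List.prefix_or_prefix_of_prefix hxu hxv) h
  · exact absurd (Or.inl (hxu.trans hxv)) h
  · exact absurd (Or.inr (hxv.trans hxu)) h
  · exact hxu

lemma not_perfect_subset_finite {A U : Set (List Bool)} (hA : A.Finite) (hU : IsPerfect U)
    (hsub : U ⊆ A) : False := by
  obtain ⟨s, hs⟩ := hU.1
  have hUfin : U.Finite := hA.subset hsub
  obtain ⟨n, hn⟩ := (hUfin.image List.length).bddAbove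
  obtain ⟨v, hv, _, hlen⟩ := exists_long hU hs n
  have := hn ⟨v, hv, rfl⟩
  omega

lemma exists_incomp {T S : Set (List Bool)} (hT : IsPerfect T) (hS : IsPerfect S)
    {t : List Bool} (htT : t ∈ T) (htS : t ∈ S) :
    ∃ u v : List Bool, u ∈ T ∧ v ∈ S ∧ t <+: u ∧ t <+: v ∧ ¬(u <+: v ∨ v <+: u) := by
  obtain ⟨w, hw, htw, h0, h1⟩ := hT.2.2 t htT
  obtain ⟨v, hv, htv, hlen⟩ := exists_long hS htS w.length
  by_cases hc : v <+: w ++ [false] ∨ w ++ [false] <+: v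
  · refine ⟨w ++ [true], v, h1, hv, htw.trans (List.prefix_append _ _), htv, ?_⟩
    rintro (h | h)
    · rcases hc with h' | h'
      · exact npf w (by simp) (h.trans h')
      · rcases List.prefix_or_prefix_of_prefix h' h with hp | hp
        · exact npf w (by simp) hp
        · exact npf w (by simp) hp
    · rcases hc with h' | h'
      · have hle : v.length ≤ w.length + 1 := by simpa using h'.length_le
        have hv1 : v.length = w.length + 1 := by omega
        have e0 : v = w ++ [false] := h'.eq_of_length (by simp [hv1])
        have e1 : v = w ++ [true] := h.eq_of_length (by simp [hv1])
        rw [e0] at e1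
        simp at e1
      · exact npf w (by simp) (h'.trans h)
  · refine ⟨w ++ [false], v, h0, hv, htw.trans (List.prefix_append _ _), htv, ?_⟩
    rintro (h | h)
    · exact hc (Or.inr h)
    · exact hc (Or.inl h)

/-- one can shrink `T` and `S` within `P`, preserving their nodes of
length `m`, so that the results have empty meet. -/
theorem exists_disjoint_refinements_preserving_level (P : Set (Set (List Bool)))
    (hP : PerfectPoset P) (T S : Set (List Bool)) (hT : T ∈ P) (hS : S ∈ P)
    (m : ℕ) :
    ∃ T' ∈ P, ∃ S' ∈ P, T' ⊆ T ∧ S' ⊆ S ∧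
      {t ∈ T' | t.length = m} = {t ∈ T | t.length = m} ∧
      {t ∈ S' | t.length = m} = {t ∈ S | t.length = m} ∧
      meet T' S' = ∅ := by
  classical
  have hTp := hP.1 T hT
  have hSp := hP.1 S hS
  -- choose incomparable extensions
  have key : ∀ t : List Bool, ∃ uv : List Bool × List Bool,
      (t ∈ T → uv.1 ∈ T ∧ t <+: uv.1) ∧ (t ∈ S → uv.2 ∈ S ∧ t <+: uv.2) ∧
      (t ∈ T → t ∈ S → ¬(uv.1 <+: uv.2 ∨ uv.2 <+: uv.1)) := by
    intro t
    by_cases hts : t ∈ T ∧ t ∈ S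
    · obtain ⟨u, v, hu, hv, h1, h2, h3⟩ := exists_incomp hTp hSp hts.1 hts.2
      exact ⟨(u, v), fun _ => ⟨hu, h1⟩, fun _ => ⟨hv, h2⟩, fun _ _ => h3⟩
    · exact ⟨(t, t), fun h => ⟨h, List.prefix_refl t⟩, fun h => ⟨h, List.prefix_refl t⟩,
        fun h1 h2 => absurd ⟨h1, h2⟩ hts⟩
  choose F hF1 hF2 hF3 using key
  set A : Set (List Bool) := {t ∈ T | t.length = m} with hA_def
  set B : Set (List Bool) := {t ∈ S | t.length = m} with hB_def
  have hAfin : A.Finite := (List.finite_length_eq Bool m).subset (fun x hx => hx.2)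
  have hBfin : B.Finite := (List.finite_length_eq Bool m).subset (fun x hx => hx.2)
  have hAne : A.Nonempty := by
    obtain ⟨s0, hs0⟩ := hTp.1
    obtain ⟨v, hv, _, hlen⟩ := exists_long hTp hs0 m
    exact ⟨v.take m, hTp.2.1 (List.take_prefix m v) hv, by rw [List.length_take]; omega⟩
  have hBne : B.Nonempty := by
    obtain ⟨s0, hs0⟩ := hSp.1
    obtain ⟨v, hv, _, hlen⟩ := exists_long hSp hs0 m
    exact ⟨v.take m, hSp.2.1 (List.take_prefix m v) hv, by rw [List.length_take]; omega⟩
  have cross : ∀ t ∈ A, ∀ s ∈ B, ¬((F t).1 <+: (F s).2 ∨ (F s).2 <+: (F t).1) := by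
    rintro t ⟨htT, htm⟩ s ⟨hsS, hsm⟩
    by_cases hts : t = s
    · subst hts; exact hF3 t htT hsS
    · exact incomp_of_ne_ext (htm.trans hsm.symm) hts (hF1 t htT).2 (hF2 s hsS).2
  set T' : Set (List Bool) := ⋃ t ∈ hAfin.toFinset, meet T (Cone ((F t).1)) with hT'_def
  set S' : Set (List Bool) := ⋃ t ∈ hBfin.toFinset, meet S (Cone ((F t).2)) with hS'_def
  have hT'P : T' ∈ P := by
    refine biUnion_mem hP _ ((Set.Finite.toFinset_nonempty hAfin).mpr hAne) _ ?_
    intro t ht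
    exact meet_cone_mem hP hT (hF1 t (hAfin.mem_toFinset.mp ht).1).1
  have hS'P : S' ∈ P := by
    refine biUnion_mem hP _ ((Set.Finite.toFinset_nonempty hBfin).mpr hBne) _ ?_
    intro t ht
    exact meet_cone_mem hP hS (hF2 t (hBfin.mem_toFinset.mp ht).1).1
  have hT'sub : T' ⊆ T := by
    rw [hT'_def]
    exact Set.iUnion₂_subset fun t ht => (meet_subset _ _).trans Set.inter_subset_left
  have hS'sub : S' ⊆ S := by
    rw [hS'_def]
    exact Set.iUnion₂_subset fun t ht => (meet_subset _ _).trans Set.inter_subset_left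
  have hT'lev : {t ∈ T' | t.length = m} = A := by
    ext x
    constructor
    · rintro ⟨hx, hxm⟩; exact ⟨hT'sub hx, hxm⟩
    · rintro ⟨hxT, hxm⟩
      refine ⟨Set.mem_biUnion (hAfin.mem_toFinset.mpr ⟨hxT, hxm⟩) ?_, hxm⟩
      exact subset_meet (restrictTo_perfect hTp (hF1 x hxT).1) (restrictTo_subset T _)
        ⟨hxT, Or.inr (hF1 x hxT).2⟩
  have hS'lev : {t ∈ S' | t.length = m} = B := by
    ext x
    constructor
    · rintro ⟨hx, hxm⟩; exact ⟨hS'sub hx, hxm⟩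
    · rintro ⟨hxS, hxm⟩
      refine ⟨Set.mem_biUnion (hBfin.mem_toFinset.mpr ⟨hxS, hxm⟩) ?_, hxm⟩
      exact subset_meet (restrictTo_perfect hSp (hF2 x hxS).1) (restrictTo_subset S _)
        ⟨hxS, Or.inr (hF2 x hxS).2⟩
  have hfin : (T' ∩ S').Finite := by
    have hsub : T' ∩ S' ⊆ ⋃ t ∈ hAfin.toFinset, {x : List Bool | x <+: (F t).1} := by
      rintro x ⟨hx1, hx2⟩
      rw [hT'_def] at hx1
      rw [hS'_def] at hx2
      simp only [Set.mem_iUnion, exists_prop] at hx1 hx2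
      obtain ⟨t, htA, hxt⟩ := hx1
      obtain ⟨s, hsB, hxs⟩ := hx2
      have hxct : x ∈ Cone ((F t).1) := ((meet_subset _ _) hxt).2
      have hxcs : x ∈ Cone ((F s).2) := ((meet_subset _ _) hxs).2
      have := cone_inter_subset
        (cross t (hAfin.mem_toFinset.mp htA) s (hBfin.mem_toFinset.mp hsB)) ⟨hxct, hxcs⟩
      simp only [Set.mem_iUnion, exists_prop]
      exact ⟨t, htA, this⟩
    exact (Set.Finite.biUnion (hAfin.toFinset.finite_toSet)
      (fun t _ => prefixes_finite ((F t).1))).subset hsub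
  have hmeet : meet T' S' = ∅ := by
    ext x
    simp only [Set.mem_empty_iff_false, iff_false]
    rintro ⟨U, ⟨hU, hUsub⟩, hxU⟩
    exact not_perfect_subset_finite hfin hU hUsub
  exact ⟨T', hT'P, S', hS'P, hT'sub, hS'sub, hT'lev, hS'lev, hmeet⟩
end

section
/- Let P be a perfect poset and let k ∈ ℕ. Then the set D_k is dense in Q(P) (every condition in Q(P) has a lower bound in D_k) and downward closed in Q(P) (if (T', n') ≤ (T, n) and (T, n) ∈ D_k, then (T', n') ∈ D_k). -/
/-- The ordering of the fusion poset `Q(P)`: `(T₂, n₂) ≤ (T₁, n₁)` iff `T₂ ⊆ T₁`,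
`n₂ ≥ n₁`, and `T₂` and `T₁` have exactly the same nodes of length `n₁`. -/
def QLe (q p : Set (List Bool) × ℕ) : Prop :=
  q.1 ⊆ p.1 ∧ p.2 ≤ q.2 ∧ {t ∈ q.1 | t.length = p.2} = {t ∈ p.1 | t.length = p.2}

/-- The set `D_k`: conditions `(T, n)` with `n ≥ k` such that every node of `T` of
length `k` has an extension in `T` of length `< n` splitting in `T`. -/
def Dk (k : ℕ) (p : Set (List Bool) × ℕ) : Prop :=
  k ≤ p.2 ∧ ∀ t ∈ p.1, t.length = k →
    ∃ u ∈ p.1, t <+: u ∧ u.length < p.2 ∧ Splits p.1 u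

lemma extend_long {T : Set (List Bool)} (hT : IsPerfect T) :
    ∀ m : ℕ, ∀ s ∈ T, ∃ t ∈ T, s <+: t ∧ m ≤ t.length := by
  intro m
  induction m with
  | zero => exact fun s hs => ⟨s, hs, List.prefix_refl s, Nat.zero_le _⟩
  | succ m ih =>
    intro s hs
    obtain ⟨t, ht, hst, hlen⟩ := ih s hs
    obtain ⟨u, hu, htu, hsp⟩ := hT.2.2 t ht
    refine ⟨u ++ [true], hsp.2, hst.trans (htu.trans ⟨[true], rfl⟩), ?_⟩
    have := htu.length_le
    simp only [List.length_append, List.length_cons, List.length_nil]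
    omega

lemma node_exact {T : Set (List Bool)} (hT : IsPerfect T) {s : List Bool} (hs : s ∈ T)
    {n : ℕ} (hn : s.length ≤ n) : ∃ t ∈ T, s <+: t ∧ t.length = n := by
  obtain ⟨t, ht, hst, hlen⟩ := extend_long hT n s hs
  refine ⟨t.take n, hT.2.1 (List.take_prefix n t) ht, ?_, by simp [hlen]⟩
  exact List.prefix_take_iff.mpr ⟨hst, hn⟩

/-- each `D_k` is dense and downward closed in the fusion poset `Q(P)`. -/
theorem Dk_dense_and_downward_closed (P : Set (Set (List Bool)))
    (hP : PerfectPoset P) (k : ℕ) :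
    (∀ T ∈ P, ∀ n : ℕ, ∃ T' ∈ P, ∃ n' : ℕ,
      QLe (T', n') (T, n) ∧ Dk k (T', n')) ∧
    (∀ T ∈ P, ∀ T' ∈ P, ∀ n n' : ℕ,
      QLe (T', n') (T, n) → Dk k (T, n) → Dk k (T', n')) := by
  constructor
  · intro T hT n
    have hTp : IsPerfect T := hP.1 T hT
    -- set of nodes of length k
    set S : Set (List Bool) := {t ∈ T | t.length = k} with hSdef
    have hSfin : S.Finite := (List.finite_length_eq Bool k).subset (fun t ht => ht.2)
    have hch : ∀ t : S, ∃ u ∈ T, (t : List Bool) <+: u ∧ Splits T u :=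
      fun t => hTp.2.2 t t.2.1
    choose f hf1 hf2 hf3 using hch
    have : Finite S := hSfin
    have hbdd : ∃ N : ℕ, ∀ t : S, (f t).length ≤ N := by
      have hfin : (Set.range fun t : S => (f t).length).Finite := Set.finite_range _
      obtain ⟨N, hN⟩ := hfin.bddAbove
      exact ⟨N, fun t => hN ⟨t, rfl⟩⟩
    obtain ⟨N, hN⟩ := hbdd
    refine ⟨T, hT, max (max n k) (N + 1), ⟨le_refl _, le_max_of_le_left (le_max_left _ _), rfl⟩,
      le_max_of_le_left (le_max_right _ _), ?_⟩
    intro t ht htl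
    have htS : t ∈ S := ⟨ht, htl⟩
    have hp : t <+: f ⟨t, htS⟩ := hf2 ⟨t, htS⟩
    refine ⟨f ⟨t, htS⟩, hf1 _, hp, ?_, hf3 _⟩
    have := hN ⟨t, htS⟩
    have : (f ⟨t, htS⟩).length < N + 1 := by omega
    exact lt_of_lt_of_le this (le_max_right _ _)
  · rintro T hT T' hT' n n' ⟨hsub, hnn, hnodes⟩ ⟨hkn, hD⟩
    have hTp : IsPerfect T := hP.1 T hT
    have hT'p : IsPerfect T' := hP.1 T' hT'
    refine ⟨le_trans hkn hnn, ?_⟩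
    intro t ht htl
    obtain ⟨u, hu, htu, hulen, husp⟩ := hD t (hsub ht) htl
    -- promote membership from T to T'
    have key : ∀ v ∈ T, v.length ≤ n → v ∈ T' := by
      intro v hv hvl
      obtain ⟨w, hw, hvw, hwl⟩ := node_exact hTp hv hvl
      have : w ∈ {t ∈ T' | t.length = n} := by
        rw [hnodes]; exact ⟨hw, hwl⟩
      exact hT'p.2.1 hvw this.1
    have h0 : u ++ [false] ∈ T' := key _ husp.1 (by simp; omega)
    have h1 : u ++ [true] ∈ T' := key _ husp.2 (by simp; omega)
    exact ⟨u, hT'p.2.1 ⟨[true], rfl⟩ h1, htu, lt_of_lt_of_le hulen hnn, h0, h1⟩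
end

section
/- Let P be a perfect poset and let F be a filter on Q(P) such that F ∩ D_k ≠ ∅ for every k ∈ ℕ. Define 𝕋_F to be the set of strings s such that there is (T, n) ∈ F with s ∈ T and length(s) ≤ n. Then 𝕋_F is a perfect tree, and 𝕋_F ⊆ T for every (T, n) ∈ F. -/
/-- a filter on `Q(P)` meeting every `D_k` yields a perfect tree `𝕋_F`
contained in every tree appearing in the filter. -/
theorem fusion_filter_gives_perfect_tree (P : Set (Set (List Bool)))
    (hP : PerfectPoset P) (F : Set (Set (List Bool) × ℕ))
    (hFsub : ∀ p ∈ F, p.1 ∈ P)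
    (hFne : F.Nonempty)
    (hFup : ∀ p ∈ F, ∀ q : Set (List Bool) × ℕ, q.1 ∈ P → QLe p q → q ∈ F)
    (hFdir : ∀ p ∈ F, ∀ q ∈ F, ∃ r ∈ F, QLe r p ∧ QLe r q)
    (hFD : ∀ k : ℕ, ∃ p ∈ F, Dk k p) :
    IsPerfect {s | ∃ p ∈ F, s ∈ p.1 ∧ s.length ≤ p.2} ∧
      ∀ p ∈ F, {s | ∃ q ∈ F, s ∈ q.1 ∧ s.length ≤ q.2} ⊆ p.1 := by
  -- every element of a perfect tree extends to arbitrarily long elements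
  have hge : ∀ T : Set (List Bool), IsPerfect T → ∀ n, ∀ s ∈ T,
      ∃ u ∈ T, s <+: u ∧ n ≤ u.length := by
    intro T hT n
    induction n with
    | zero => intro s hs; exact ⟨s, hs, List.prefix_refl s, Nat.zero_le _⟩
    | succ n ih =>
      intro s hs
      obtain ⟨u, hu, hsu, hnu⟩ := ih s hs
      obtain ⟨t, ht, hut, hsp⟩ := hT.2.2 u hu
      refine ⟨t ++ [true], hsp.2, hsu.trans (hut.trans ⟨[true], rfl⟩), ?_⟩
      have := hut.length_le
      simp only [List.length_append, List.length_cons, List.length_nil]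
      omega
  have heq : ∀ T : Set (List Bool), IsPerfect T → ∀ s ∈ T, ∀ n, s.length ≤ n →
      ∃ u ∈ T, s <+: u ∧ u.length = n := by
    intro T hT s hs n hn
    obtain ⟨u, hu, hsu, hnu⟩ := hge T hT n s hs
    refine ⟨u.take n, hT.2.1 (List.take_prefix n u) hu, ?_, by simp [hnu]⟩
    exact (List.prefix_take_iff).2 ⟨hsu, hn⟩
  -- key: if s is witnessed by q and r ≤ q in Q(P), then s ∈ r.1
  have hdown : ∀ q ∈ F, ∀ s ∈ q.1, s.length ≤ q.2 → ∀ r : Set (List Bool) × ℕ,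
      r ∈ F → QLe r q → s ∈ r.1 := by
    intro q hq s hsq hlen r hrF hrq
    have hqP : IsPerfect q.1 := hP.1 q.1 (hFsub q hq)
    obtain ⟨u, hu, hsu, hulen⟩ := heq q.1 hqP s hsq q.2 hlen
    have : u ∈ {t ∈ r.1 | t.length = q.2} := by
      rw [hrq.2.2]; exact ⟨hu, hulen⟩
    exact (hP.1 r.1 (hFsub r hrF)).2.1 hsu this.1
  refine ⟨⟨?_, ?_, ?_⟩, ?_⟩
  · -- nonempty
    obtain ⟨p, hp, _⟩ := hFD 0
    obtain ⟨x, hx⟩ := (hP.1 p.1 (hFsub p hp)).1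
    exact ⟨[], p, hp, (hP.1 p.1 (hFsub p hp)).2.1 List.nil_prefix hx, by simp⟩
  · -- tree
    intro s t hst ⟨q, hq, htq, hlen⟩
    exact ⟨q, hq, (hP.1 q.1 (hFsub q hq)).2.1 hst htq,
      le_trans hst.length_le hlen⟩
  · -- splitting
    rintro s ⟨q, hq, hsq, hlen⟩
    obtain ⟨p, hpF, hpD⟩ := hFD s.length
    obtain ⟨r, hrF, hrp, hrq⟩ := hFdir p hpF q hq
    have hsr : s ∈ r.1 := hdown q hq s hsq hlen r hrF hrq
    have hsp : s ∈ p.1 := hrp.1 hsr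
    obtain ⟨u, hu, hsu, hulen, husp⟩ := hpD.2 s hsp rfl
    refine ⟨u, ⟨p, hpF, hu, le_of_lt hulen⟩, hsu, ?_, ?_⟩
    · exact ⟨p, hpF, husp.1, by simp; omega⟩
    · exact ⟨p, hpF, husp.2, by simp; omega⟩
  · -- containment
    rintro p hp s ⟨q, hq, hsq, hlen⟩
    obtain ⟨r, hrF, hrp, hrq⟩ := hFdir p hp q hq
    exact hrp.1 (hdown q hq s hsq hlen r hrF hrq)
end

section
/- Let P be a perfect poset, let (T, n) ∈ Q(P), and suppose that for every node t of T of length n we are given a nonempty finite set 𝒳_t ⊆ P such that S ⊆ T_t for every S ∈ 𝒳_t. Then there is a condition (T̄, n̄) ∈ Q(P) with (T̄, n̄) ≤ (T, n) such that: (a) for every node t of T of length n and every S ∈ 𝒳_t, there is a node s of T̄ of length n̄ extending t with T̄_s ⊆ S; and (b) for every node s of T̄ of length n̄, there exist a node t of T of length n that is an initial segment of s and some S ∈ 𝒳_t with T̄_s ⊆ S. -/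

lemma fcfr_ext_incomp {a a' b : List Bool} (h : ¬(a <+: b ∨ b <+: a)) (ha : a <+: a') :
    ¬(a' <+: b ∨ b <+: a') := by
  rintro (h' | h')
  · exact h (Or.inl (ha.trans h'))
  · exact h (List.prefix_or_prefix_of_prefix ha h')

lemma fcfr_long_above {S : Set (List Bool)} (hS : IsPerfect S) {s : List Bool} (hs : s ∈ S) :
    ∀ L : ℕ, ∃ u ∈ S, s <+: u ∧ L ≤ u.length := by
  intro L
  induction L with
  | zero => exact ⟨s, hs, List.prefix_rfl, Nat.zero_le _⟩
  | succ L ih =>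
    obtain ⟨u, hu, hsu, hL⟩ := ih
    obtain ⟨w, hw, huw, hsp⟩ := hS.2.2 u hu
    have hlw := huw.length_le
    exact ⟨w ++ [true], hsp.2, hsu.trans (huw.trans (List.prefix_append w [true])),
      by simp; omega⟩

lemma fcfr_exact_length {S : Set (List Bool)} (hS : IsPerfect S) {s : List Bool} (hs : s ∈ S)
    {L : ℕ} (hL : s.length ≤ L) : ∃ u ∈ S, s <+: u ∧ u.length = L := by
  obtain ⟨w, hw, hsw, hLw⟩ := fcfr_long_above hS hs L
  refine ⟨w.take L, hS.2.1 (List.take_prefix L w) hw,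
    List.prefix_take_iff.mpr ⟨hsw, hL⟩, by simp [List.length_take]; omega⟩

lemma fcfr_splitnode_above {S : Set (List Bool)} (hS : IsPerfect S) {s : List Bool}
    (hs : s ∈ S) (L : ℕ) : ∃ u ∈ S, s <+: u ∧ Splits S u ∧ L ≤ u.length := by
  obtain ⟨w, hw, hsw, hLw⟩ := fcfr_long_above hS hs L
  obtain ⟨u, hu, hwu, hsp⟩ := hS.2.2 w hw
  exact ⟨u, hu, hsw.trans hwu, hsp, hLw.trans hwu.length_le⟩

lemma fcfr_prefix_concat_cases {t u : List Bool} {b : Bool} (h : t <+: u ++ [b]) :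
    t <+: u ∨ t = u ++ [b] := by
  rcases le_or_gt t.length u.length with hle | hlt
  · exact Or.inl (List.prefix_of_prefix_length_le h (List.prefix_append u [b]) hle)
  · refine Or.inr (h.eq_of_length ?_)
    have := h.length_le
    simp at this ⊢
    omega

lemma fcfr_root_mem {T S : Set (List Bool)} {t : List Bool} (hS : IsPerfect S)
    (hsub : S ⊆ restrictTo T t) : t ∈ S := by
  obtain ⟨x, hx⟩ := hS.1
  obtain ⟨u, hu, -, h0, h1⟩ := hS.2.2 x hx
  have c0 := (hsub h0).2
  have c1 := (hsub h1).2
  have hfx : (u ++ [false] : List Bool) ≠ u ++ [true] := by simp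
  have htu : t <+: u := by
    rcases c0 with h | h
    · rcases fcfr_prefix_concat_cases h with h' | h'
      · exact h'
      · exfalso
        rcases c1 with g | g
        · rcases fcfr_prefix_concat_cases g with g' | g'
          · have := g'.length_le
            rw [h'] at this; simp at this
          · exact hfx (h' ▸ g')
        · have : u ++ [true] = t := g.eq_of_length (by rw [h']; simp)
          exact hfx (this ▸ h').symm
    · exfalso
      rcases c1 with g | g
      · rcases fcfr_prefix_concat_cases g with g' | g'
        · have h2 := g'.length_le
          have h3 := h.length_le
          simp at h3; omega
        · have : u ++ [false] = t := h.eq_of_length (by rw [g']; simp)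
          exact hfx (this.trans g')
      · rcases List.prefix_or_prefix_of_prefix h g with p | p
        · exact hfx (p.eq_of_length (by simp))
        · exact hfx (p.eq_of_length (by simp)).symm
  exact hS.2.1 htu hu

lemma fcfr_restrict_perfect {S : Set (List Bool)} (hS : IsPerfect S) {s : List Bool}
    (hs : s ∈ S) : IsPerfect (S ∩ Cone s) := by
  refine ⟨⟨s, hs, Or.inl List.prefix_rfl⟩, ?_, ?_⟩
  · intro a b hab hb
    refine ⟨hS.2.1 hab hb.1, ?_⟩
    rcases hb.2 with h | h
    · exact List.prefix_or_prefix_of_prefix h hab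
    · exact Or.inr (hab.trans h)
  · rintro x ⟨hxS, hxc⟩
    have hex : ∃ w ∈ S, x <+: w ∧ s <+: w := by
      rcases hxc with h | h
      · exact ⟨x, hxS, List.prefix_rfl, h⟩
      · exact ⟨s, hs, h, List.prefix_rfl⟩
    obtain ⟨w, hw, hxw, hsw⟩ := hex
    obtain ⟨u, hu, hwu, hsp⟩ := hS.2.2 w hw
    have hsu : s <+: u := hsw.trans hwu
    exact ⟨u, ⟨hu, Or.inl hsu⟩, hxw.trans hwu,
      ⟨hsp.1, Or.inl (hsu.trans (List.prefix_append u [false]))⟩,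
      ⟨hsp.2, Or.inl (hsu.trans (List.prefix_append u [true]))⟩⟩

lemma fcfr_restrict_mem_P {P : Set (Set (List Bool))} (hP : PerfectPoset P)
    {S : Set (List Bool)} {s : List Bool} (hSP : S ∈ P) (hs : s ∈ S) : S ∩ Cone s ∈ P := by
  have hperf := hP.1 S hSP
  have hmeet : meet S (Cone s) = S ∩ Cone s := by
    apply Set.Subset.antisymm
    · exact Set.sUnion_subset fun U hU => hU.2
    · intro x hx
      exact ⟨S ∩ Cone s, ⟨fcfr_restrict_perfect hperf hs, Set.Subset.rfl⟩, hx⟩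
  have hne : meet S (Cone s) ≠ ∅ := by
    rw [hmeet, ← Set.nonempty_iff_ne_empty]
    exact ⟨s, hs, Or.inl List.prefix_rfl⟩
  have := hP.2.2.2 S hSP (Cone s) (hP.2.1 s) hne
  rwa [hmeet] at this

lemma fcfr_biUnion_mem {P : Set (Set (List Bool))} (hP : PerfectPoset P) {α : Type*}
    {s : Finset α} (hne : s.Nonempty) {f : α → Set (List Bool)}
    (hf : ∀ a ∈ s, f a ∈ P) : (⋃ a ∈ s, f a) ∈ P := by
  classical
  induction s using Finset.cons_induction with
  | empty => exact absurd hne (by simp)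
  | cons a s ha ih =>
    rw [show (⋃ x ∈ Finset.cons a s ha, f x) = f a ∪ ⋃ x ∈ s, f x by
      simp [Finset.cons_eq_insert, Set.biUnion_insert]]
    rcases s.eq_empty_or_nonempty with rfl | hs
    · simpa using hf a (Finset.mem_cons_self a _)
    · exact hP.2.2.1 _ (hf a (Finset.mem_cons_self a _)) _
        (ih hs fun b hb => hf b (Finset.mem_cons_of_mem hb))

lemma fcfr_incomp_concat_flip {s u : List Bool} (h : s <+: u) (hlt : s.length < u.length) :
    ¬(s ++ [!(u[s.length]'hlt)] <+: u ∨ u <+: s ++ [!(u[s.length]'hlt)]) := by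
  have key : ¬(s ++ [!(u[s.length]'hlt)] <+: u) := by
    intro hh
    have h2 := hh.getElem (i := s.length) (by simp)
    simp at h2
  rintro (hh | hh)
  · exact key hh
  · have heq : u = s ++ [!(u[s.length]'hlt)] := by
      refine hh.eq_of_length ?_
      have := hh.length_le
      simp at this ⊢
      omega
    have h2 := congrArg (fun l : List Bool => l[s.length]?) heq
    simp only [List.getElem?_eq_getElem hlt, List.getElem?_concat_length] at h2
    simp at h2

lemma fcfr_exists_sel (t : List Bool) :
    ∀ 𝒮 : Finset (Set (List Bool)), (∀ S ∈ 𝒮, IsPerfect S ∧ t ∈ S) →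
    ∃ sel : Set (List Bool) → List Bool,
      (∀ S ∈ 𝒮, sel S ∈ S ∧ t <+: sel S ∧ Splits S (sel S)) ∧
      (∀ S ∈ 𝒮, ∀ S' ∈ 𝒮, S ≠ S' → ¬(sel S <+: sel S' ∨ sel S' <+: sel S)) := by
  intro 𝒮
  classical
  induction 𝒮 using Finset.cons_induction with
  | empty =>
    exact fun _ => ⟨fun _ => [], fun S hS => absurd hS (Finset.notMem_empty S),
      fun S hS => absurd hS (Finset.notMem_empty S)⟩
  | cons S₀ 𝒮 hS₀ ih =>
    intro h
    obtain ⟨sel, hsel, hinc⟩ := ih (fun S hS => h S (Finset.mem_cons_of_mem hS))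
    have hMb : ∀ S ∈ 𝒮, (sel S).length ≤ 𝒮.sup (fun S => (sel S).length) :=
      fun S hS => Finset.le_sup (f := fun S => (sel S).length) hS
    obtain ⟨hP0, ht0⟩ := h S₀ (Finset.mem_cons_self _ _)
    obtain ⟨u, huS, htu, husp, huL⟩ :=
      fcfr_splitnode_above hP0 ht0 (𝒮.sup (fun S => (sel S).length) + 1)
    have key : ∀ S : Set (List Bool), ∃ w : List Bool,
        ((S ∈ 𝒮 ∧ sel S <+: u) → (w ∈ S ∧ sel S <+: w ∧ Splits S w ∧
          ¬(w <+: u ∨ u <+: w))) ∧ (¬(S ∈ 𝒮 ∧ sel S <+: u) → w = sel S) := by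
      intro S
      by_cases hc : S ∈ 𝒮 ∧ sel S <+: u
      · obtain ⟨hS, hpre⟩ := hc
        have hSperf := (h S (Finset.mem_cons_of_mem hS)).1
        have hlen : (sel S).length < u.length := lt_of_le_of_lt (hMb S hS) (by omega)
        have hx : sel S ++ [!(u[(sel S).length]'hlen)] ∈ S := by
          obtain ⟨-, -, hsp⟩ := hsel S hS
          cases hbv : (u[(sel S).length]'hlen) with
          | false => simpa using hsp.2
          | true => simpa using hsp.1
        obtain ⟨w, hwS, hxw, hwsp⟩ := hSperf.2.2 _ hx
        refine ⟨w, fun _ => ⟨hwS, (List.prefix_append _ _).trans hxw, hwsp,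
          fcfr_ext_incomp (fcfr_incomp_concat_flip hpre hlen) hxw⟩,
          fun hc' => absurd ⟨hS, hpre⟩ hc'⟩
      · exact ⟨sel S, fun hc' => absurd hc' hc, fun _ => rfl⟩
    choose w hw1 hw2 using key
    have fact1 : ∀ S ∈ 𝒮, ¬(w S <+: u ∨ u <+: w S) := by
      intro S hS
      by_cases hc : sel S <+: u
      · exact (hw1 S ⟨hS, hc⟩).2.2.2
      · rw [hw2 S (by tauto)]
        rintro (hh | hh)
        · exact hc hh
        · have h1 := hh.length_le
          have h2 := hMb S hS
          omega
    have fact2 : ∀ S ∈ 𝒮, sel S <+: w S := by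
      intro S hS
      by_cases hc : sel S <+: u
      · exact (hw1 S ⟨hS, hc⟩).2.1
      · rw [hw2 S (by tauto)]
    have fact3 : ∀ S ∈ 𝒮, ∀ S' ∈ 𝒮, S ≠ S' → ¬(w S <+: w S' ∨ w S' <+: w S) := by
      intro S hS S' hS' hne
      by_cases hc : sel S <+: u <;> by_cases hc' : sel S' <+: u
      · exact absurd (List.prefix_or_prefix_of_prefix hc hc') (hinc S hS S' hS' hne)
      · rw [hw2 S' (by tauto)]
        exact fcfr_ext_incomp (hinc S hS S' hS' hne) (fact2 S hS)
      · rw [hw2 S (by tauto)]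
        intro hh
        exact fcfr_ext_incomp (hinc S' hS' S hS hne.symm) (fact2 S' hS') (Or.symm hh)
      · rw [hw2 S (by tauto), hw2 S' (by tauto)]
        exact hinc S hS S' hS' hne
    refine ⟨fun S => if S = S₀ then u else w S, ?_, ?_⟩
    · intro S hS
      rcases Finset.mem_cons.mp hS with rfl | hS'
      · simp only [if_pos rfl]
        exact ⟨huS, htu, husp⟩
      · have hne : S ≠ S₀ := fun e => hS₀ (e ▸ hS')
        simp only [if_neg hne]
        by_cases hc : sel S <+: u
        · obtain ⟨hwS, hsw, hwsp, -⟩ := hw1 S ⟨hS', hc⟩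
          exact ⟨hwS, ((hsel S hS').2.1).trans hsw, hwsp⟩
        · rw [hw2 S (by tauto)]
          exact hsel S hS'
    · intro S hS S' hS' hne
      rcases Finset.mem_cons.mp hS with rfl | hS2 <;> rcases Finset.mem_cons.mp hS' with h' | hS2'
      · exact absurd h'.symm hne
      · have hne' : S' ≠ S := fun e => hS₀ (e ▸ hS2')
        simp only [if_pos rfl, if_neg hne']
        intro hh
        exact fact1 S' hS2' (Or.symm hh)
      · subst h'
        have hne'' : S ≠ S' := hne
        simp only [if_pos rfl, if_neg hne'']
        exact fact1 S hS2
      · have hne1 : S ≠ S₀ := fun e => hS₀ (e ▸ hS2)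
        have hne2 : S' ≠ S₀ := fun e => hS₀ (e ▸ hS2')
        simp only [if_neg hne1, if_neg hne2]
        exact fact3 S hS2 S' hS2' hne

lemma fcfr_perNode {P : Set (Set (List Bool))} (hP : PerfectPoset P) {T : Set (List Bool)}
    {t : List Bool} (Xt : Set (Set (List Bool))) (hfin : Xt.Finite) (hne : Xt.Nonempty)
    (hXP : Xt ⊆ P) (hXr : ∀ S ∈ Xt, S ⊆ restrictTo T t) :
    ∃ W ∈ P, ∃ m : ℕ,
      W ⊆ restrictTo T t ∧ t ∈ W ∧
      (∀ S ∈ Xt, ∀ L, m ≤ L → ∃ s, s ∈ W ∧ s ∈ S ∧ s.length = L ∧ t <+: s ∧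
        ∀ u ∈ W, (s <+: u ∨ u <+: s) → u ∈ S) ∧
      (∀ s ∈ W, m ≤ s.length → ∃ S ∈ Xt, s ∈ S ∧ t <+: s ∧
        ∀ u ∈ W, (s <+: u ∨ u <+: s) → u ∈ S) := by
  classical
  have hmem : ∀ S, S ∈ hfin.toFinset ↔ S ∈ Xt := fun S => hfin.mem_toFinset
  have hps : ∀ S ∈ hfin.toFinset, IsPerfect S ∧ t ∈ S := by
    intro S hS
    have hSX := (hmem S).mp hS
    have hp := hP.1 S (hXP hSX)
    exact ⟨hp, fcfr_root_mem hp (hXr S hSX)⟩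
  obtain ⟨sel, hsel, hinc⟩ := fcfr_exists_sel t hfin.toFinset hps
  set m := hfin.toFinset.sup (fun S => (sel S).length) with hm
  have hmb : ∀ S ∈ hfin.toFinset, (sel S).length ≤ m :=
    fun S hS => Finset.le_sup (f := fun S => (sel S).length) hS
  set W := ⋃ S ∈ hfin.toFinset, (S ∩ Cone (sel S)) with hW
  have hWmem : ∀ x, x ∈ W ↔ ∃ S ∈ hfin.toFinset, x ∈ S ∧ (sel S <+: x ∨ x <+: sel S) := by
    intro x
    simp only [hW, Set.mem_iUnion, Set.mem_inter_iff, exists_prop]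
    constructor
    · rintro ⟨S, hS, hxS, hc⟩; exact ⟨S, hS, hxS, hc⟩
    · rintro ⟨S, hS, hxS, hc⟩; exact ⟨S, hS, hxS, hc⟩
  -- force: comparable with sel S and long enough implies extends sel S
  have hforce : ∀ S ∈ hfin.toFinset, ∀ x : List Bool, m ≤ x.length →
      (sel S <+: x ∨ x <+: sel S) → sel S <+: x := by
    intro S hS x hx hc
    rcases hc with h | h
    · exact h
    · have h1 := h.length_le
      have h2 := hmb S hS
      have : x = sel S := h.eq_of_length (by omega)
      rw [this]
  have hWP : W ∈ P := by
    refine fcfr_biUnion_mem hP ?_ ?_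
    · obtain ⟨S, hS⟩ := hne
      exact ⟨S, (hmem S).mpr hS⟩
    · intro S hS
      exact fcfr_restrict_mem_P hP (hXP ((hmem S).mp hS)) (hsel S hS).1
  have hWr : W ⊆ restrictTo T t := by
    intro x hx
    obtain ⟨S, hS, hxS, -⟩ := (hWmem x).mp hx
    exact hXr S ((hmem S).mp hS) hxS
  have htW : t ∈ W := by
    obtain ⟨S, hSX⟩ := hne
    have hS := (hmem S).mpr hSX
    exact (hWmem t).mpr ⟨S, hS, (hps S hS).2, Or.inr (hsel S hS).2.1⟩
  have hkey : ∀ S ∈ hfin.toFinset, ∀ s, s ∈ S → sel S <+: s → m ≤ s.length →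
      ∀ u ∈ W, (s <+: u ∨ u <+: s) → u ∈ S := by
    intro S hS s hsS hps' hms u hu hcomp
    rcases hcomp with hsu | hus
    · obtain ⟨S', hS', huS', hcone⟩ := (hWmem u).mp hu
      have hsel'u : sel S' <+: u := hforce S' hS' u (le_trans hms hsu.length_le) hcone
      have hcompsel := List.prefix_or_prefix_of_prefix (hps'.trans hsu) hsel'u
      by_cases heq : S = S'
      · subst heq; exact huS'
      · exact absurd hcompsel (hinc S hS S' hS' heq)
    · exact (hps S hS).1.2.1 hus hsS
  refine ⟨W, hWP, m, hWr, htW, ?_, ?_⟩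
  · intro S hSX L hL
    have hS := (hmem S).mpr hSX
    have hpiece : IsPerfect (S ∩ Cone (sel S)) :=
      fcfr_restrict_perfect (hps S hS).1 (hsel S hS).1
    have hselmem : sel S ∈ S ∩ Cone (sel S) := ⟨(hsel S hS).1, Or.inl List.prefix_rfl⟩
    obtain ⟨s, hs, hpre, hlen⟩ := fcfr_exact_length hpiece hselmem (le_trans (hmb S hS) hL)
    refine ⟨s, (hWmem s).mpr ⟨S, hS, hs.1, hs.2⟩, hs.1, hlen, (hsel S hS).2.1.trans hpre,
      hkey S hS s hs.1 hpre (by omega)⟩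
  · intro s hsW hms
    obtain ⟨S, hS, hsS, hcone⟩ := (hWmem s).mp hsW
    have hpre : sel S <+: s := hforce S hS s hms hcone
    exact ⟨S, (hmem S).mp hS, hsS, (hsel S hS).2.1.trans hpre, hkey S hS s hsS hpre hms⟩

/-- given finitely many refinements below each node of `T` of length `n`,
one can find a single `(T̄, n̄) ≤ (T, n)` in `Q(P)` capturing all of them. -/
theorem fusion_capture_finite_refinements (P : Set (Set (List Bool)))
    (hP : PerfectPoset P) (T : Set (List Bool)) (hT : T ∈ P) (n : ℕ)
    (X : List Bool → Set (Set (List Bool)))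
    (hX : ∀ t ∈ T, t.length = n →
      (X t).Finite ∧ (X t).Nonempty ∧ X t ⊆ P ∧ ∀ S ∈ X t, S ⊆ restrictTo T t) :
    ∃ Tbar ∈ P, ∃ nbar : ℕ, QLe (Tbar, nbar) (T, n) ∧
      (∀ t ∈ T, t.length = n → ∀ S ∈ X t,
        ∃ s ∈ Tbar, s.length = nbar ∧ t <+: s ∧ restrictTo Tbar s ⊆ S) ∧
      (∀ s ∈ Tbar, s.length = nbar →
        ∃ t ∈ T, t.length = n ∧ t <+: s ∧ ∃ S ∈ X t, restrictTo Tbar s ⊆ S) := by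
  classical
  have hTperf := hP.1 T hT
  have hnil : ([] : List Bool) ∈ T := by
    obtain ⟨x, hx⟩ := hTperf.1
    exact hTperf.2.1 (List.nil_prefix) hx
  have hch : ∀ t : List Bool, ∃ (W : Set (List Bool)) (m : ℕ),
      (t ∈ T ∧ t.length = n) → (W ∈ P ∧ W ⊆ restrictTo T t ∧ t ∈ W ∧
        (∀ S ∈ X t, ∀ L, m ≤ L → ∃ s, s ∈ W ∧ s ∈ S ∧ s.length = L ∧ t <+: s ∧
          ∀ u ∈ W, (s <+: u ∨ u <+: s) → u ∈ S) ∧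
        (∀ s ∈ W, m ≤ s.length → ∃ S ∈ X t, s ∈ S ∧ t <+: s ∧
          ∀ u ∈ W, (s <+: u ∨ u <+: s) → u ∈ S)) := by
    intro t
    by_cases ht : t ∈ T ∧ t.length = n
    · obtain ⟨hfin, hne, hXP, hXr⟩ := hX t ht.1 ht.2
      obtain ⟨W, hWP, m, h1, h2, h3, h4⟩ := fcfr_perNode hP (X t) hfin hne hXP hXr
      exact ⟨W, m, fun _ => ⟨hWP, h1, h2, h3, h4⟩⟩
    · exact ⟨∅, 0, fun hh => absurd hh ht⟩
  choose W m hWm using hch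
  have hNfin : {t | t ∈ T ∧ t.length = n}.Finite :=
    (List.finite_length_eq Bool n).subset (fun t ht => ht.2)
  have hNmem : ∀ t, t ∈ hNfin.toFinset ↔ (t ∈ T ∧ t.length = n) :=
    fun t => hNfin.mem_toFinset
  have hNne : hNfin.toFinset.Nonempty := by
    obtain ⟨u, hu, -, hlen⟩ := fcfr_exact_length hTperf hnil (Nat.zero_le n)
    exact ⟨u, (hNmem u).mpr ⟨hu, by simpa using hlen⟩⟩
  set Tbar := ⋃ t ∈ hNfin.toFinset, W t with hTbardef
  have hTbarmem : ∀ x, x ∈ Tbar ↔ ∃ t ∈ hNfin.toFinset, x ∈ W t := by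
    intro x
    simp only [hTbardef, Set.mem_iUnion, exists_prop]
  set nbar := max n (hNfin.toFinset.sup m) with hnbardef
  have hnbarm : ∀ t ∈ hNfin.toFinset, m t ≤ nbar :=
    fun t ht => le_max_of_le_right (Finset.le_sup ht)
  have hnn : n ≤ nbar := le_max_left _ _
  have hWp : ∀ t ∈ hNfin.toFinset, W t ∈ P ∧ W t ⊆ restrictTo T t ∧ t ∈ W t ∧
      (∀ S ∈ X t, ∀ L, m t ≤ L → ∃ s, s ∈ W t ∧ s ∈ S ∧ s.length = L ∧ t <+: s ∧
        ∀ u ∈ W t, (s <+: u ∨ u <+: s) → u ∈ S) ∧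
      (∀ s ∈ W t, m t ≤ s.length → ∃ S ∈ X t, s ∈ S ∧ t <+: s ∧
        ∀ u ∈ W t, (s <+: u ∨ u <+: s) → u ∈ S) :=
    fun t ht => hWm t ((hNmem t).mp ht)
  have hTbarP : Tbar ∈ P := fcfr_biUnion_mem hP hNne (fun t ht => (hWp t ht).1)
  have hTbarT : Tbar ⊆ T := by
    intro x hx
    obtain ⟨t, ht, hxW⟩ := (hTbarmem x).mp hx
    exact ((hWp t ht).2.1 hxW).1
  -- cross-node separation
  have hsep : ∀ t ∈ hNfin.toFinset, ∀ s, t <+: s → s.length = nbar → ∀ u ∈ Tbar,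
      s <+: u → u ∈ W t := by
    intro t ht s hts hslen u hu hsu
    obtain ⟨t', ht', huW⟩ := (hTbarmem u).mp hu
    have hut' := (hWp t' ht').2.1 huW
    have hlt : t.length = n := ((hNmem t).mp ht).2
    have hlt' : t'.length = n := ((hNmem t').mp ht').2
    have hsl := hsu.length_le
    have ht'u : t' <+: u := by
      rcases hut'.2 with h | h
      · exact h
      · have h1 := h.length_le
        have : u = t' := h.eq_of_length (by omega)
        rw [this]
    have htu : t <+: u := hts.trans hsu
    have : t = t' := by
      rcases List.prefix_or_prefix_of_prefix htu ht'u with h | h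
      · exact h.eq_of_length (by omega)
      · exact (h.eq_of_length (by omega)).symm
    rw [this]; exact huW
  -- restriction lemma
  have hres : ∀ t ∈ hNfin.toFinset, ∀ S ∈ X t, IsPerfect S → ∀ s, t <+: s →
      s.length = nbar → s ∈ S →
      (∀ u ∈ W t, (s <+: u ∨ u <+: s) → u ∈ S) → restrictTo Tbar s ⊆ S := by
    intro t ht S hSX hSp s hts hslen hsS hloc u hu
    obtain ⟨huT, hcomp⟩ := hu
    rcases hcomp with hsu | hus
    · exact hloc u (hsep t ht s hts hslen u huT hsu) (Or.inl hsu)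
    · exact hSp.2.1 hus hsS
  refine ⟨Tbar, hTbarP, nbar, ⟨hTbarT, hnn, ?_⟩, ?_, ?_⟩
  · -- same nodes of length n
    ext x
    simp only [Set.mem_setOf_eq]
    constructor
    · rintro ⟨hx, hlen⟩
      exact ⟨hTbarT hx, hlen⟩
    · rintro ⟨hx, hlen⟩
      have hxN : x ∈ hNfin.toFinset := (hNmem x).mpr ⟨hx, hlen⟩
      exact ⟨(hTbarmem x).mpr ⟨x, hxN, (hWp x hxN).2.2.1⟩, hlen⟩
  · -- clause (a)
    intro t htT htlen S hSX
    have ht : t ∈ hNfin.toFinset := (hNmem t).mpr ⟨htT, htlen⟩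
    obtain ⟨s, hsW, hsS, hslen, hts, hloc⟩ := (hWp t ht).2.2.2.1 S hSX nbar (hnbarm t ht)
    have hSp : IsPerfect S := hP.1 S ((hX t htT htlen).2.2.1 hSX)
    exact ⟨s, (hTbarmem s).mpr ⟨t, ht, hsW⟩, hslen, hts,
      hres t ht S hSX hSp s hts hslen hsS hloc⟩
  · -- clause (b)
    intro s hsT hslen
    obtain ⟨t, ht, hsW⟩ := (hTbarmem s).mp hsT
    obtain ⟨htT, htlen⟩ := (hNmem t).mp ht
    obtain ⟨S, hSX, hsS, hts, hloc⟩ := (hWp t ht).2.2.2.2 s hsW (by rw [hslen]; exact hnbarm t ht)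
    have hSp : IsPerfect S := hP.1 S ((hX t htT htlen).2.2.1 hSX)
    exact ⟨t, htT, htlen, hts, S, hSX,
      hres t ht S hSX hSp s hts hslen hsS hloc⟩
end

section
/- Let U, S₁, …, S_r (with r ≥ 1) be perfect trees and suppose U ⊆ S₁ ∪ ⋯ ∪ S_r. Then there exist an index i with 1 ≤ i ≤ r and a node u ∈ U such that U_u ⊆ S_i. -/
/-- if a perfect tree is covered by finitely many perfect trees, then
some restriction of it is contained in one of them. -/
theorem perfect_covered_by_finitely_many (r : ℕ) (hr : 1 ≤ r)
    (U : Set (List Bool)) (S : Fin r → Set (List Bool))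
    (hU : IsPerfect U) (hS : ∀ i, IsPerfect (S i))
    (hsub : U ⊆ ⋃ i, S i) :
    ∃ i : Fin r, ∃ u ∈ U, restrictTo U u ⊆ S i := by
  by_contra hcon
  push_neg at hcon
  have key : ∀ i, ∀ u ∈ U, ∃ t ∈ U, u <+: t ∧ t ∉ S i := by
    intro i u hu
    obtain ⟨t, ht, hts⟩ := Set.not_subset.mp (hcon i u hu)
    obtain ⟨htU, hcomp⟩ := ht
    rcases hcomp with h | h
    · exact ⟨t, htU, h, hts⟩
    · exact ⟨u, hu, List.prefix_refl u, fun hmem => hts ((hS i).2.1 h hmem)⟩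
  have main : ∀ s : Finset (Fin r), ∀ u ∈ U, ∃ t ∈ U, u <+: t ∧ ∀ i ∈ s, t ∉ S i := by
    intro s
    induction s using Finset.induction_on with
    | empty => intro u hu; exact ⟨u, hu, List.prefix_refl u, by simp⟩
    | @insert j s' hj ih =>
      intro u hu
      obtain ⟨t, htU, hut, havoid⟩ := ih u hu
      obtain ⟨t', ht'U, htt', ht'S⟩ := key j t htU
      refine ⟨t', ht'U, hut.trans htt', ?_⟩
      intro i hi
      rcases Finset.mem_insert.mp hi with rfl | hi
      · exact ht'S
      · exact fun hmem => havoid i hi ((hS i).2.1 htt' hmem)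
  obtain ⟨u, hu⟩ := hU.1
  obtain ⟨t, htU, -, havoid⟩ := main Finset.univ u hu
  obtain ⟨_, ⟨i, rfl⟩, hti⟩ := hsub htU
  exact havoid i (Finset.mem_univ i) hti
end

section
/- Let P be a perfect poset and let 𝒜 ⊆ P be predense in P, i.e., every element of P is compatible in P with some element of 𝒜. Then for every T ∈ P, every m ∈ ℕ, and every node s of T of length m, there exist T̄ ∈ P and A ∈ 𝒜 such that T̄ ⊆ T, T̄ has exactly the same nodes of length m as T, and T̄_s ⊆ A. -/
lemma meet_cone_eq {T : Set (List Bool)} (hT : IsPerfect T) {s : List Bool} (hs : s ∈ T) :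
    meet T (Cone s) = restrictTo T s := by
  apply Set.Subset.antisymm
  · rintro t ⟨U, ⟨hU, hUsub⟩, htU⟩
    obtain ⟨h1, h2⟩ := hUsub htU
    exact ⟨h1, h2⟩
  · intro t ht
    exact ⟨restrictTo T s, ⟨restrict_isPerfect hT hs, fun u hu => ⟨hu.1, hu.2⟩⟩, ht⟩

lemma restrict_mem {P : Set (Set (List Bool))} (hP : PerfectPoset P)
    {T : Set (List Bool)} (hTP : T ∈ P) {s : List Bool} (hs : s ∈ T) :
    restrictTo T s ∈ P := by
  obtain ⟨hperf, hcone, hun, hmeet⟩ := hP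
  have h := meet_cone_eq (hperf T hTP) hs
  have hne : meet T (Cone s) ≠ ∅ := by
    rw [h]
    intro hcon
    have : s ∈ restrictTo T s := ⟨hs, Or.inl (List.prefix_refl s)⟩
    rw [hcon] at this; exact this
  have := hmeet T hTP (Cone s) (hcone s) hne
  rwa [h] at this

lemma root_mem {U : Set (List Bool)} (hU : IsPerfect U) {s : List Bool}
    (hcomp : ∀ u ∈ U, s <+: u ∨ u <+: s) : s ∈ U := by
  obtain ⟨⟨u0, hu0⟩, htree, hsplit⟩ := hU
  have key : ∀ k : ℕ, ∀ t ∈ U, t <+: s → s.length - t.length ≤ k → s ∈ U := by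
    intro k
    induction k with
    | zero =>
      intro t ht hts hl
      have : s.length ≤ t.length := by omega
      have : t = s := List.IsPrefix.eq_of_length_le hts (by omega)
      rwa [this] at ht
    | succ k ih =>
      intro t ht hts hl
      obtain ⟨t', ht'U, htt', hsp⟩ := hsplit t ht
      rcases hcomp t' ht'U with h | h
      · exact htree h ht'U
      · rcases eq_or_ne t' s with rfl | hne
        · exact ht'U
        · obtain ⟨r, hr⟩ := h
          match r, hr with
          | [], hr => exact absurd (by simpa using hr) hne
          | b :: r', hr =>
            have hmem : t' ++ [b] ∈ U := by cases b; exact hsp.1; exact hsp.2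
            have hpre : t' ++ [b] <+: s := ⟨r', by simpa using hr⟩
            apply ih (t' ++ [b]) hmem hpre
            have h1 : t.length ≤ t'.length := htt'.length_le
            have h2 : (t' ++ [b]).length = t'.length + 1 := by simp
            omega
  rcases hcomp u0 hu0 with h | h
  · exact htree h hu0
  · exact key s.length u0 hu0 h (by omega)

lemma union_mem_of_finite {P : Set (Set (List Bool))} (hP : PerfectPoset P)
    {U : Set (List Bool)} (hU : U ∈ P) {T : Set (List Bool)}
    {F : Set (List Bool)} (hF : F.Finite) (hmem : ∀ t ∈ F, restrictTo T t ∈ P) :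
    U ∪ ⋃ t ∈ F, restrictTo T t ∈ P := by
  refine Set.Finite.induction_on (motive := fun F _ =>
      (∀ t ∈ F, restrictTo T t ∈ P) → U ∪ ⋃ t ∈ F, restrictTo T t ∈ P) F hF
    (fun _ => by simpa using hU) ?_ hmem
  intro a F' ha hF' ih hmem'
  have : U ∪ ⋃ t ∈ insert a F', restrictTo T t
      = (U ∪ ⋃ t ∈ F', restrictTo T t) ∪ restrictTo T a := by
    rw [Set.biUnion_insert, Set.union_comm (restrictTo T a), ← Set.union_assoc]
  rw [this]
  exact hP.2.2.1 _ (ih fun t ht => hmem' t (Set.mem_insert_of_mem a ht)) _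
    (hmem' a (Set.mem_insert a F'))

/-- below any node of any condition one can shrink into an element of
a predense set, preserving the nodes of that length. -/
theorem shrink_into_predense (P : Set (Set (List Bool)))
    (hP : PerfectPoset P) (A : Set (Set (List Bool))) (hAP : A ⊆ P)
    (hpre : ∀ T ∈ P, ∃ a ∈ A, CompatIn P T a) :
    ∀ T ∈ P, ∀ m : ℕ, ∀ s ∈ T, s.length = m →
      ∃ Tbar ∈ P, ∃ a ∈ A, Tbar ⊆ T ∧
        {t ∈ Tbar | t.length = m} = {t ∈ T | t.length = m} ∧
        restrictTo Tbar s ⊆ a := by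
  intro T hTP m s hsT hslen
  have hTperf := hP.1 T hTP
  have hTsP : restrictTo T s ∈ P := restrict_mem hP hTP hsT
  obtain ⟨a, haA, U, hUP, hUTs, hUa⟩ := hpre _ hTsP
  have hUperf := hP.1 U hUP
  have hcomp : ∀ u ∈ U, s <+: u ∨ u <+: s := fun u hu => (hUTs hu).2
  have hsU : s ∈ U := root_mem hUperf hcomp
  -- other nodes of length m
  set F : Set (List Bool) := {t ∈ T | t.length = m ∧ t ≠ s} with hF
  have hFfin : F.Finite := by
    apply Set.Finite.subset (List.finite_length_eq (α := Bool) m)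
    intro t ht; exact ht.2.1
  have hFmem : ∀ t ∈ F, restrictTo T t ∈ P := fun t ht => restrict_mem hP hTP ht.1
  refine ⟨U ∪ ⋃ t ∈ F, restrictTo T t, union_mem_of_finite hP hUP hFfin hFmem, a, haA, ?_, ?_, ?_⟩
  · rintro x (hx | hx)
    · exact (hUTs hx).1
    · simp only [Set.mem_iUnion] at hx
      obtain ⟨t, _, hxt⟩ := hx
      exact hxt.1
  · ext x
    simp only [Set.mem_setOf_eq, Set.mem_union, Set.mem_iUnion]
    constructor
    · rintro ⟨hx | hx, hlen⟩
      · exact ⟨(hUTs hx).1, hlen⟩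
      · obtain ⟨t, _, hxt⟩ := hx; exact ⟨hxt.1, hlen⟩
    · rintro ⟨hxT, hlen⟩
      rcases eq_or_ne x s with rfl | hne
      · exact ⟨Or.inl hsU, hlen⟩
      · exact ⟨Or.inr ⟨x, ⟨hxT, hlen, hne⟩, hxT, Or.inl (List.prefix_refl x)⟩, hlen⟩
  · rintro x ⟨hx | hx, hxs⟩
    · exact hUa hx
    · simp only [Set.mem_iUnion] at hx
      obtain ⟨t, ⟨htT, htlen, htne⟩, hxT, hxt⟩ := hx
      -- x is comparable with both s and t, |s|=|t|=m, s ≠ t ⇒ x <+: s, so x ∈ U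
      have hxps : x <+: s := by
        rcases hxs with h | h
        · -- s <+: x: then t also comparable with x, same length ⇒ t = s, contradiction
          exfalso
          rcases hxt with h' | h'
          · have : s = t := List.IsPrefix.eq_of_length
              (List.prefix_of_prefix_length_le h h' (by omega)) (by omega)
            exact htne this.symm
          · have : s = t := List.IsPrefix.eq_of_length (h.trans h') (by omega)
            exact htne this.symm
        · exact h
      exact hUa (hUperf.2.1 hxps hsU)
end

section
/- Let I be a type and let (O, ≤) be a linear order. Let S be an I-tree and let ⟨T_ξ⟩_{ξ ∈ O} be a family of I-trees such that: (i) the family is increasing, i.e., T_ξ ⊆ T_η whenever ξ ≤ η; (ii) S ⊆ T_ξ for every ξ ∈ O; (iii) S has no infinite branch and each T_ξ has no infinite branch; and (iv) for all ξ ≤ η in O, no element of T_η \ T_ξ properly extends an element of T_ξ \ S. Then the union ⋃_{ξ ∈ O} T_ξ has no infinite branch. -/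
/-- An `I`-tree: a set of finite sequences from `I` closed under initial segments. -/
def ITree {I : Type*} (T : Set (List I)) : Prop :=
  ∀ ⦃s t : List I⦄, s <+: t → t ∈ T → s ∈ T

/-- An infinite branch of a set of finite sequences: a function `x : ℕ → I` all of
whose finite initial segments belong to the set. -/
def HasInfBranch {I : Type*} (T : Set (List I)) : Prop :=
  ∃ x : ℕ → I, ∀ n : ℕ, (List.ofFn fun i : Fin n => x i) ∈ T

/-- an increasing union of branchless trees over a linear order, where
no new element ever properly extends an old element outside the common base `S`,
has no infinite branch. -/
theorem union_of_branchless_trees {I : Type*} {O : Type*} [LinearOrder O]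
    (S : Set (List I)) (T : O → Set (List I))
    (hS : ITree S) (hT : ∀ ξ, ITree (T ξ))
    (hmono : ∀ ξ η : O, ξ ≤ η → T ξ ⊆ T η)
    (hbase : ∀ ξ, S ⊆ T ξ)
    (hSnb : ¬ HasInfBranch S)
    (hTnb : ∀ ξ, ¬ HasInfBranch (T ξ))
    (hnew : ∀ ξ η : O, ξ ≤ η → ∀ t ∈ T η, t ∉ T ξ →
      ∀ s ∈ T ξ, s ∉ S → ¬(s <+: t ∧ s ≠ t)) :
    ¬ HasInfBranch (⋃ ξ, T ξ) := by
  rintro ⟨x, hx⟩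
  set s : ℕ → List I := fun n => List.ofFn fun i : Fin n => x i with hs
  have hpre : ∀ {m n : ℕ}, m ≤ n → s m <+: s n := by
    intro m n h
    have heq : s m = (s n).take m := by
      apply List.ext_getElem
      · simp [hs, h]
      · intro i h1 h2
        simp [hs]
    exact heq ▸ List.take_prefix m (s n)
  have hnS : ∃ N, s N ∉ S := by
    by_contra h
    push_neg at h
    exact hSnb ⟨x, h⟩
  obtain ⟨N, hN⟩ := hnS
  obtain ⟨ξ, hξ⟩ := Set.mem_iUnion.1 (hx N)
  have key : ∀ n, N ≤ n → s n ∈ T ξ := by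
    intro n hn
    induction n with
    | zero =>
      have : N = 0 := Nat.le_zero.1 hn
      exact this ▸ hξ
    | succ n ih =>
      rcases Nat.lt_or_ge n N with h | h
      · have : N = n + 1 := le_antisymm hn h
        exact this ▸ hξ
      · have hsn := ih h
        have hsnS : s n ∉ S := fun hmem => hN (hS (hpre h) hmem)
        obtain ⟨η, hη⟩ := Set.mem_iUnion.1 (hx (n + 1))
        rcases le_total η ξ with hle | hle
        · exact hmono _ _ hle hη
        · by_contra hnot
          refine hnew ξ η hle _ hη hnot _ hsn hsnS ⟨hpre (Nat.le_succ n), ?_⟩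
          intro he
          have := congrArg List.length he
          simp [hs] at this
  refine hTnb ξ ⟨x, fun n => ?_⟩
  rcases le_total N n with h | h
  · exact key n h
  · exact hT ξ (hpre h) (key N le_rfl)
end
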